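/- For a strictly positive matrix A ∈ R^{n×n}, the Birkhoff projective diameter Δ(A) = sup over strictly positive x, y of d_H(Ax, Ay) is finite, bounded by max over i,j,k,l of log( (A_{ik} A_{jl}) / (A_{jk} A_{il}) ). -/

import Mathlib

/-- Hilbert's projective metric on the positive orthant of `ℝⁿ`. -/
noncomputable def dH {n : ℕ} (x y : Fin n → ℝ) : ℝ :=
  Real.log ((⨆ i, x i / y i) / (⨅ i, x i / y i))

/-- The Birkhoff projective diameter of a strictly positive matrix is finite,
bounded by the max of log((A i k * A j l)/(A j k * A i l)) over all i, j, k, l. -/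
theorem projective_diameter_bound {n : ℕ} (hn : 0 < n)
    (A : Matrix (Fin n) (Fin n) ℝ) (hA : ∀ i j, 0 < A i j)
    (x y : Fin n → ℝ) (hx : ∀ i, 0 < x i) (hy : ∀ i, 0 < y i) :
    dH (A.mulVec x) (A.mulVec y) ≤
      ⨆ p : Fin n × Fin n × Fin n × Fin n,
        Real.log ((A p.1 p.2.2.1 * A p.2.1 p.2.2.2) /
          (A p.2.1 p.2.2.1 * A p.1 p.2.2.2)) := by
  haveI : Nonempty (Fin n) := ⟨⟨0, hn⟩⟩
  have hAx : ∀ i, 0 < A.mulVec x i := fun i =>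
    Finset.sum_pos (fun j _ => mul_pos (hA i j) (hx j)) ⟨⟨0, hn⟩, Finset.mem_univ _⟩
  have hAy : ∀ i, 0 < A.mulVec y i := fun i =>
    Finset.sum_pos (fun j _ => mul_pos (hA i j) (hy j)) ⟨⟨0, hn⟩, Finset.mem_univ _⟩
  set r : Fin n → ℝ := fun i => A.mulVec x i / A.mulVec y i with hr
  have hrpos : ∀ i, 0 < r i := fun i => div_pos (hAx i) (hAy i)
  obtain ⟨i0, hi0⟩ := Finite.exists_max r
  obtain ⟨j0, hj0⟩ := Finite.exists_min r
  obtain ⟨q, hq⟩ := Finite.exists_max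
    (fun p : Fin n × Fin n => A i0 p.1 * A j0 p.2 / (A j0 p.1 * A i0 p.2))
  set M : ℝ := A i0 q.1 * A j0 q.2 / (A j0 q.1 * A i0 q.2) with hM
  have hMpos : 0 < M := div_pos (mul_pos (hA _ _) (hA _ _)) (mul_pos (hA _ _) (hA _ _))
  have key : A.mulVec x i0 * A.mulVec y j0 ≤ M * (A.mulVec x j0 * A.mulVec y i0) := by
    have expand : ∀ a b : Fin n, A.mulVec x a * A.mulVec y b
        = ∑ k, ∑ l, (A a k * x k) * (A b l * y l) := by
      intro a b
      simp only [Matrix.mulVec, dotProduct]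
      rw [Finset.sum_mul_sum]
    rw [expand, expand, Finset.mul_sum]
    refine Finset.sum_le_sum fun k _ => ?_
    rw [Finset.mul_sum]
    refine Finset.sum_le_sum fun l _ => ?_
    have h := hq (k, l)
    simp only at h
    rw [div_le_iff₀ (mul_pos (hA j0 k) (hA i0 l))] at h
    have hxy : (0:ℝ) ≤ x k * y l := le_of_lt (mul_pos (hx k) (hy l))
    calc A i0 k * x k * (A j0 l * y l) = (A i0 k * A j0 l) * (x k * y l) := by ring
      _ ≤ (M * (A j0 k * A i0 l)) * (x k * y l) := mul_le_mul_of_nonneg_right h hxy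
      _ = M * (A j0 k * x k * (A i0 l * y l)) := by ring
  have hsup : (⨆ i, r i) ≤ r i0 := ciSup_le hi0
  have hinf : r j0 ≤ ⨅ i, r i := le_ciInf hj0
  have hinfpos : 0 < ⨅ i, r i := lt_of_lt_of_le (hrpos j0) hinf
  have hsuppos : 0 < ⨆ i, r i :=
    lt_of_lt_of_le (hrpos i0) (le_ciSup (Finite.bddAbove_range r) i0)
  have h1 : (⨆ i, r i) / (⨅ i, r i) ≤ r i0 / r j0 :=
    div_le_div₀ (hrpos i0).le hsup (hrpos j0) hinf
  have h2 : r i0 / r j0 ≤ M := by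
    have heq : r i0 / r j0 = (A.mulVec x i0 * A.mulVec y j0) / (A.mulVec x j0 * A.mulVec y i0) := by
      rw [hr]
      field_simp
    rw [heq, div_le_iff₀ (mul_pos (hAx j0) (hAy i0))]
    linarith [key]
  have h3 : dH (A.mulVec x) (A.mulVec y) ≤ Real.log M := by
    unfold dH
    exact Real.log_le_log (div_pos hsuppos hinfpos) (le_trans h1 h2)
  refine le_trans h3 ?_
  have := le_ciSup (f := fun p : Fin n × Fin n × Fin n × Fin n =>
    Real.log ((A p.1 p.2.2.1 * A p.2.1 p.2.2.2) / (A p.2.1 p.2.2.1 * A p.1 p.2.2.2)))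
    (Finite.bddAbove_range _) (i0, j0, q.1, q.2)
  simpa [hM] using this
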